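/- Let (f₁,…,f_N; p₁,…,p_N) be an admissible iterated function system on [0,1] that is asymptotically stable on (0,1) with atomless invariant measure μ*, and let a ∈ (0,1/2) and I ⊆ (0,1) be an open interval with μ*(I) > 0. Then there exist r ∈ ℕ and a word (i₁,…,i_r) ∈ {1,…,N}^r such that f_{(i₁,…,i_r)}([a, 1−a]) ⊆ I. -/

import Mathlib

open Set MeasureTheory Finset Filter

/-- An admissible iterated function system on `[0,1]`: increasing homeomorphisms of
`[0,1]` fixing the endpoints, `C¹` near the endpoints with positive derivatives
`d i` at `0` and `e i` at `1`, positive probabilities, positive Lyapunov exponents at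
both endpoints, and at every interior point some map moves it left and some right. -/
structure AdmissibleIFS (N : ℕ) (f : Fin N → ℝ → ℝ) (p d e : Fin N → ℝ) : Prop where
  meas : ∀ i, Measurable (f i)
  mono : ∀ i, StrictMonoOn (f i) (Icc 0 1)
  maps : ∀ i, MapsTo (f i) (Icc 0 1) (Icc 0 1)
  cont : ∀ i, ContinuousOn (f i) (Icc 0 1)
  surj : ∀ i, SurjOn (f i) (Icc 0 1) (Icc 0 1)
  fix0 : ∀ i, f i 0 = 0
  fix1 : ∀ i, f i 1 = 1
  ppos : ∀ i, 0 < p i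
  psum : ∑ i, p i = 1
  c1 : ∀ i, ∃ η > (0:ℝ), ContDiffOn ℝ 1 (f i) (Icc 0 η) ∧ ContDiffOn ℝ 1 (f i) (Icc (1 - η) 1)
  deriv0 : ∀ i, HasDerivWithinAt (f i) (d i) (Icc 0 1) 0
  deriv1 : ∀ i, HasDerivWithinAt (f i) (e i) (Icc 0 1) 1
  dpos : ∀ i, 0 < d i
  epos : ∀ i, 0 < e i
  lyap0 : 0 < ∑ i, p i * Real.log (d i)
  lyap1 : 0 < ∑ i, p i * Real.log (e i)
  interior : ∀ x ∈ Ioo (0:ℝ) 1, (∃ i, f i x < x) ∧ (∃ j, x < f j x)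

/-- Iterates along a sequence of indices: `wordIter f ω n = f_{ω (n-1)} ∘ ⋯ ∘ f_{ω 0}`. -/
def wordIter {N : ℕ} (f : Fin N → ℝ → ℝ) (ω : ℕ → Fin N) : ℕ → ℝ → ℝ
  | 0 => id
  | n + 1 => f (ω n) ∘ wordIter f ω n

/-- `⌊n^{1/4}⌋`. -/
noncomputable def nroot4 (n : ℕ) : ℕ := ⌊(n : ℝ) ^ ((1 : ℝ) / 4)⌋₊

/-- Application of a finite word: `applyWord f [i₁, …, iₙ] x = f_{iₙ}(⋯ f_{i₁}(x) ⋯)`. -/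
def applyWord {N : ℕ} (f : Fin N → ℝ → ℝ) (w : List (Fin N)) (x : ℝ) : ℝ :=
  w.foldl (fun y a => f a y) x

namespace Stmt13Aux

variable {N : ℕ} {f : Fin N → ℝ → ℝ}

lemma applyWord_cons (i : Fin N) (w : List (Fin N)) (x : ℝ) :
    applyWord f (i :: w) x = applyWord f w (f i x) := rfl

lemma applyWord_concat (w : List (Fin N)) (i : Fin N) (x : ℝ) :
    applyWord f (w ++ [i]) x = f i (applyWord f w x) := by
  simp [applyWord, List.foldl_append]

lemma applyWord_mapsTo (hmaps : ∀ i, MapsTo (f i) (Icc 0 1) (Icc 0 1)) :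
    ∀ (w : List (Fin N)), MapsTo (applyWord f w) (Icc 0 1) (Icc 0 1) := by
  intro w
  induction w with
  | nil => intro x hx; simpa [applyWord] using hx
  | cons i t ih =>
    intro x hx
    rw [applyWord_cons]
    exact ih (hmaps i hx)

lemma applyWord_mono (hmaps : ∀ i, MapsTo (f i) (Icc 0 1) (Icc 0 1))
    (hmono : ∀ i, StrictMonoOn (f i) (Icc 0 1)) :
    ∀ (w : List (Fin N)) (x y : ℝ), x ∈ Icc (0:ℝ) 1 → y ∈ Icc (0:ℝ) 1 → x ≤ y →
      applyWord f w x ≤ applyWord f w y := by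
  intro w
  induction w with
  | nil => intro x y _ _ hxy; simpa [applyWord] using hxy
  | cons i t ih =>
    intro x y hx hy hxy
    rw [applyWord_cons, applyWord_cons]
    exact ih (f i x) (f i y) (hmaps i hx) (hmaps i hy)
      ((hmono i).monotoneOn hx hy hxy)

lemma map_finset_sum {α : Type*} {g : ℝ → ℝ} (hg : Measurable g) (s : Finset α)
    (μ : α → Measure ℝ) :
    Measure.map g (∑ w ∈ s, μ w) = ∑ w ∈ s, Measure.map g (μ w) := by
  classical
  induction s using Finset.induction with
  | empty => simp
  | insert _ _ hne ih => rw [Finset.sum_insert hne, Finset.sum_insert hne,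
      Measure.map_add _ _ hg, ih]

/-- The `n`-th iterate of the transfer operator applied to a Dirac measure is a
convex combination of Dirac measures at word images. -/
lemma iterate_dirac (hm : ∀ i, Measurable (f i)) (p : Fin N → ℝ) (x : ℝ) (n : ℕ) :
    (fun ν : Measure ℝ => ∑ i, ENNReal.ofReal (p i) • Measure.map (f i) ν)^[n]
        (Measure.dirac x)
      = ∑ w : Fin n → Fin N, (∏ k, ENNReal.ofReal (p (w k))) •
          Measure.dirac (applyWord f (List.ofFn w) x) := by
  induction n with
  | zero =>
    simp [applyWord]
  | succ n ih =>
    rw [Function.iterate_succ_apply', ih]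
    have step : ∀ i : Fin N,
        Measure.map (f i) (∑ w : Fin n → Fin N, (∏ k, ENNReal.ofReal (p (w k))) •
            Measure.dirac (applyWord f (List.ofFn w) x))
          = ∑ w : Fin n → Fin N, (∏ k, ENNReal.ofReal (p (w k))) •
              Measure.dirac (f i (applyWord f (List.ofFn w) x)) := by
      intro i
      rw [map_finset_sum (hm i)]
      refine Finset.sum_congr rfl fun w _ => ?_
      rw [Measure.map_smul, Measure.map_dirac' (hm i)]
    simp only [step]
    rw [← (Fin.snocEquiv (fun _ => Fin N)).sum_comp
      (fun v : Fin (n+1) → Fin N => (∏ k, ENNReal.ofReal (p (v k))) •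
        Measure.dirac (applyWord f (List.ofFn v) x))]
    rw [Fintype.sum_prod_type]
    refine Finset.sum_congr rfl fun i _ => ?_
    rw [Finset.smul_sum]
    refine Finset.sum_congr rfl fun w _ => ?_
    have he : (Fin.snocEquiv (fun _ => Fin N)) (i, w) = (Fin.snoc w i : Fin (n+1) → Fin N) := rfl
    have h1 : List.ofFn (Fin.snoc w i : Fin (n+1) → Fin N) = List.ofFn w ++ [i] := by
      rw [List.ofFn_succ']
      simp [Fin.snoc_castSucc, List.concat_eq_append]
    have h2 : (∏ k, ENNReal.ofReal (p ((Fin.snoc w i : Fin (n+1) → Fin N) k)))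
        = ENNReal.ofReal (p i) * ∏ k, ENNReal.ofReal (p (w k)) := by
      rw [Fin.prod_univ_castSucc]
      simp [Fin.snoc_castSucc, mul_comm]
    rw [he, h1, h2, applyWord_concat, smul_smul]

lemma isProbabilityMeasure_step (hm : ∀ i, Measurable (f i)) {p : Fin N → ℝ}
    (hp : ∀ i, 0 < p i) (hsum : ∑ i, p i = 1) (μ : Measure ℝ)
    (hμ : IsProbabilityMeasure μ) :
    IsProbabilityMeasure (∑ i, ENNReal.ofReal (p i) • Measure.map (f i) μ) := by
  constructor
  rw [Measure.finset_sum_apply]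
  have : ∀ i : Fin N, (ENNReal.ofReal (p i) • Measure.map (f i) μ) univ
      = ENNReal.ofReal (p i) := by
    intro i
    have : IsProbabilityMeasure (Measure.map (f i) μ) :=
      Measure.isProbabilityMeasure_map (hm i).aemeasurable
    rw [Measure.smul_apply, measure_univ, smul_eq_mul, mul_one]
  rw [Finset.sum_congr rfl fun i _ => this i,
    ← ENNReal.ofReal_sum_of_nonneg fun i _ => (hp i).le, hsum, ENNReal.ofReal_one]

lemma isProbabilityMeasure_iterate (hm : ∀ i, Measurable (f i)) {p : Fin N → ℝ}
    (hp : ∀ i, 0 < p i) (hsum : ∑ i, p i = 1) (μ : Measure ℝ)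
    (hμ : IsProbabilityMeasure μ) (n : ℕ) :
    IsProbabilityMeasure
      ((fun ν : Measure ℝ => ∑ i, ENNReal.ofReal (p i) • Measure.map (f i) ν)^[n] μ) := by
  induction n with
  | zero => simpa using hμ
  | succ n ih =>
    rw [Function.iterate_succ_apply']
    exact isProbabilityMeasure_step hm hp hsum _ ih

end Stmt13Aux

/-- For an admissible, asymptotically stable system with atomless
invariant measure `μ*`, and any open interval `I = (c, d) ⊆ (0,1)` of positive
`μ*`-measure, some finite word maps `[a, 1-a]` into `I`. -/
theorem stmt13 (N : ℕ) (f : Fin N → ℝ → ℝ) (p d₀ e₀ : Fin N → ℝ)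
    (hadm : AdmissibleIFS N f p d₀ e₀)
    (μstar : Measure ℝ) (hprob : IsProbabilityMeasure μstar)
    (hμ01 : μstar (Ioo (0:ℝ) 1) = 1)
    (hinv : (∑ i, ENNReal.ofReal (p i) • Measure.map (f i) μstar) = μstar)
    (hatomless : ∀ x : ℝ, μstar {x} = 0)
    -- asymptotic stability on `(0,1)`
    (hstable : ∀ μ : Measure ℝ, IsProbabilityMeasure μ → μ (Ioo (0:ℝ) 1) = 1 →
      ∀ φ : BoundedContinuousFunction ℝ ℝ,
        Tendsto
          (fun n => ∫ x, φ x ∂((fun ν : Measure ℝ =>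
            ∑ i, ENNReal.ofReal (p i) • Measure.map (f i) ν)^[n] μ))
          atTop (nhds (∫ x, φ x ∂μstar)))
    (a c d : ℝ) (ha : a ∈ Ioo (0:ℝ) (1/2))
    (hI : Ioo c d ⊆ Ioo (0:ℝ) 1) (hIpos : 0 < μstar (Ioo c d)) :
    ∃ (r : ℕ) (w : List (Fin N)), w.length = r ∧
      ∀ x ∈ Icc a (1 - a), applyWord f w x ∈ Ioo c d := by
  classical
  obtain ⟨ha0, ha2⟩ := ha
  have ha1 : a < 1 := by linarith
  have haI : a ∈ Icc (0:ℝ) 1 := ⟨ha0.le, by linarith⟩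
  have h1aI : 1 - a ∈ Icc (0:ℝ) 1 := ⟨by linarith, by linarith⟩
  by_contra hcon
  push_neg at hcon
  have key : ∀ w : List (Fin N), applyWord f w (1 - a) < d → applyWord f w a ≤ c := by
    intro w hwd
    by_contra hac
    push_neg at hac
    obtain ⟨x, hx, hnot⟩ := hcon w.length w rfl
    apply hnot
    have hxI : x ∈ Icc (0:ℝ) 1 := ⟨by linarith [hx.1], by linarith [hx.2]⟩
    have m1 := Stmt13Aux.applyWord_mono hadm.maps hadm.mono w a x haI hxI hx.1
    have m2 := Stmt13Aux.applyWord_mono hadm.maps hadm.mono w x (1 - a) hxI h1aI hx.2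
    exact ⟨lt_of_lt_of_le hac m1, lt_of_le_of_lt m2 hwd⟩
  have hprobA : ∀ n, IsProbabilityMeasure
      ((fun ν : Measure ℝ => ∑ i, ENNReal.ofReal (p i) • Measure.map (f i) ν)^[n]
        (Measure.dirac a)) := fun n =>
    Stmt13Aux.isProbabilityMeasure_iterate hadm.meas hadm.ppos hadm.psum _ inferInstance n
  have hprobB : ∀ n, IsProbabilityMeasure
      ((fun ν : Measure ℝ => ∑ i, ENNReal.ofReal (p i) • Measure.map (f i) ν)^[n]
        (Measure.dirac (1 - a))) := fun n =>
    Stmt13Aux.isProbabilityMeasure_iterate hadm.meas hadm.ppos hadm.psum _ inferInstance n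
  let μA : ℕ → ProbabilityMeasure ℝ := fun n => ⟨_, hprobA n⟩
  let μB : ℕ → ProbabilityMeasure ℝ := fun n => ⟨_, hprobB n⟩
  let μL : ProbabilityMeasure ℝ := ⟨μstar, hprob⟩
  have hdiracA : (Measure.dirac a) (Ioo (0:ℝ) 1) = 1 := by
    rw [Measure.dirac_apply_of_mem]; exact ⟨ha0, ha1⟩
  have hdiracB : (Measure.dirac (1 - a)) (Ioo (0:ℝ) 1) = 1 := by
    rw [Measure.dirac_apply_of_mem]; constructor <;> [linarith; linarith]
  have htendA : Tendsto μA atTop (nhds μL) := by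
    rw [MeasureTheory.ProbabilityMeasure.tendsto_iff_forall_integral_tendsto]
    intro φ
    exact hstable (Measure.dirac a) inferInstance hdiracA φ
  have htendB : Tendsto μB atTop (nhds μL) := by
    rw [MeasureTheory.ProbabilityMeasure.tendsto_iff_forall_integral_tendsto]
    intro φ
    exact hstable (Measure.dirac (1 - a)) inferInstance hdiracB φ
  have hfrA : (μL : Measure ℝ) (frontier (Iic c)) = 0 := by
    rw [frontier_Iic]; exact hatomless c
  have hfrB : (μL : Measure ℝ) (frontier (Iio d)) = 0 := by
    rw [frontier_Iio]; exact hatomless d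
  have hmA : Tendsto (fun n => (μA n : Measure ℝ) (Iic c)) atTop
      (nhds ((μL : Measure ℝ) (Iic c))) :=
    MeasureTheory.ProbabilityMeasure.tendsto_measure_of_null_frontier_of_tendsto' htendA hfrA
  have hmB : Tendsto (fun n => (μB n : Measure ℝ) (Iio d)) atTop
      (nhds ((μL : Measure ℝ) (Iio d))) :=
    MeasureTheory.ProbabilityMeasure.tendsto_measure_of_null_frontier_of_tendsto' htendB hfrB
  have hineq : ∀ n, (μB n : Measure ℝ) (Iio d) ≤ (μA n : Measure ℝ) (Iic c) := by
    intro n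
    show ((fun ν : Measure ℝ => ∑ i, ENNReal.ofReal (p i) • Measure.map (f i) ν)^[n]
        (Measure.dirac (1 - a))) (Iio d)
      ≤ ((fun ν : Measure ℝ => ∑ i, ENNReal.ofReal (p i) • Measure.map (f i) ν)^[n]
        (Measure.dirac a)) (Iic c)
    rw [Stmt13Aux.iterate_dirac hadm.meas p (1 - a) n,
      Stmt13Aux.iterate_dirac hadm.meas p a n,
      Measure.finset_sum_apply, Measure.finset_sum_apply]
    refine Finset.sum_le_sum fun w _ => ?_
    rw [Measure.smul_apply, Measure.smul_apply, smul_eq_mul, smul_eq_mul,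
      Measure.dirac_apply' _ measurableSet_Iio, Measure.dirac_apply' _ measurableSet_Iic]
    by_cases h : applyWord f (List.ofFn w) (1 - a) < d
    · have h2 : applyWord f (List.ofFn w) a ≤ c := key _ h
      rw [Set.indicator_of_mem (Set.mem_Iio.mpr h), Set.indicator_of_mem (Set.mem_Iic.mpr h2)]
      simp
    · rw [Set.indicator_of_notMem (by simpa using h)]
      simp
  have hlim : μstar (Iio d) ≤ μstar (Iic c) :=
    le_of_tendsto_of_tendsto' hmB hmA hineq
  have hcd : c < d := by
    by_contra h
    rw [Set.Ioo_eq_empty h] at hIpos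
    simp at hIpos
  have hunion : Iic c ∪ Ioo c d = Iio d := by
    ext x
    simp only [Set.mem_union, Set.mem_Iic, Set.mem_Ioo, Set.mem_Iio]
    constructor
    · rintro (h | ⟨h1, h2⟩) <;> linarith
    · intro h
      rcases le_or_gt x c with h' | h'
      · exact Or.inl h'
      · exact Or.inr ⟨h', h⟩
  have hdisj : Disjoint (Iic c) (Ioo c d) := by
    rw [Set.disjoint_left]
    intro x hx hx2
    exact absurd hx2.1 (not_lt.mpr hx)
  have hadd := measure_union (μ := μstar) hdisj measurableSet_Ioo
  rw [hunion] at hadd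
  rw [hadd] at hlim
  have hne : μstar (Iic c) ≠ ⊤ := measure_ne_top _ _
  have hzero : μstar (Ioo c d) = 0 := by
    have h0 : μstar (Iic c) + μstar (Ioo c d) ≤ μstar (Iic c) + 0 := by simpa using hlim
    have h1 := (ENNReal.add_le_add_iff_left hne).mp h0
    exact le_antisymm h1 zero_le
  exact hIpos.ne' hzero
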